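/- Let f : X → X be a continuous map of a compact metric space, let m be any Borel probability measure on X (e.g. normalized Lebesgue measure on a manifold), and let d* be a metric inducing the weak* topology on the space of Borel probability measures. Then there exists an f-invariant Borel probability measure μ such that for every ε > 0 the set B_ε(μ) = {x ∈ X : d*(τ_f(x), μ) < ε} has m(B_ε(μ)) > 0, where d*(τ_f(x), μ) = inf{d*(ν,μ) : ν ∈ τ_f(x)} and τ_f(x) is the set of weak* limit points of the empirical measures (1/n)Σ_{i=0}^{n−1} δ_{f^i(x)}. -/

import Mathlib

open MeasureTheory Filter Topology
open scoped ENNReal NNReal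
set_option linter.unusedSectionVars false
set_option linter.unusedVariables false
set_option maxHeartbeats 1000000

/-- The empirical measure `(1/(n+1)) Σ_{i ≤ n} δ_{f^i(x)}`. -/
noncomputable def empiricalMeasure {X : Type*} [MeasurableSpace X] (f : X → X) (x : X)
    (n : ℕ) : Measure X :=
  ((n : ℝ≥0∞) + 1)⁻¹ • ∑ i ∈ Finset.range (n + 1), Measure.dirac (f^[i] x)

instance empiricalMeasure_isProbabilityMeasure {X : Type*} [MeasurableSpace X]
    (f : X → X) (x : X) (n : ℕ) : IsProbabilityMeasure (empiricalMeasure f x n) := by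
  constructor
  have h : (∑ i ∈ Finset.range (n + 1), Measure.dirac (f^[i] x)) Set.univ
      = (n : ℝ≥0∞) + 1 := by
    rw [Measure.finset_sum_apply]
    simp [measure_univ]
  rw [empiricalMeasure, Measure.smul_apply, h, smul_eq_mul, ENNReal.inv_mul_cancel]
  · simp
  · simp [ENNReal.add_eq_top]

/-- The empirical measure as a probability measure. -/
noncomputable def empirical {X : Type*} [MeasurableSpace X] (f : X → X) (x : X) (n : ℕ) :
    ProbabilityMeasure X :=
  ⟨empiricalMeasure f x n, empiricalMeasure_isProbabilityMeasure f x n⟩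

/-- `τ_f(x)`: the set of weak* limit points of the empirical measures of the orbit of
`x`. -/
def tauSet {X : Type*} [MeasurableSpace X] [TopologicalSpace X] [OpensMeasurableSpace X]
    (f : X → X) (x : X) : Set (ProbabilityMeasure X) :=
  {ν | MapClusterPt ν atTop (empirical f x)}

namespace PhysLike

/-- Limit of an `ℝ≥0∞`-valued sequence along an ultrafilter. -/
noncomputable def ulim (𝒰 : Ultrafilter ℕ) (u : ℕ → ℝ≥0∞) : ℝ≥0∞ := (𝒰.map u).lim

lemma ulim_spec (𝒰 : Ultrafilter ℕ) (u : ℕ → ℝ≥0∞) : Tendsto u 𝒰 (𝓝 (ulim 𝒰 u)) :=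
  (𝒰.map u).le_nhds_lim

lemma ulim_eq {𝒰 : Ultrafilter ℕ} {u : ℕ → ℝ≥0∞} {L : ℝ≥0∞}
    (h : Tendsto u 𝒰 (𝓝 L)) : ulim 𝒰 u = L :=
  tendsto_nhds_unique (ulim_spec 𝒰 u) h

lemma ulim_const (𝒰 : Ultrafilter ℕ) (c : ℝ≥0∞) : ulim 𝒰 (fun _ => c) = c :=
  ulim_eq tendsto_const_nhds

lemma ulim_mono {𝒰 : Ultrafilter ℕ} {u v : ℕ → ℝ≥0∞} (h : ∀ n, u n ≤ v n) :
    ulim 𝒰 u ≤ ulim 𝒰 v :=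
  le_of_tendsto_of_tendsto' (ulim_spec 𝒰 u) (ulim_spec 𝒰 v) h

lemma ulim_add (𝒰 : Ultrafilter ℕ) (u v : ℕ → ℝ≥0∞) :
    ulim 𝒰 (fun n => u n + v n) = ulim 𝒰 u + ulim 𝒰 v :=
  ulim_eq ((ulim_spec 𝒰 u).add (ulim_spec 𝒰 v))

lemma antitone_sum_le_integral {w : ℝ → ℝ≥0∞} (hw : Antitone w) {δ : ℝ} (hδ : 0 < δ) (m : ℕ) :
    (∑ i ∈ Finset.range m, w ((i+1)*δ) * ENNReal.ofReal δ) ≤ ∫⁻ t in Set.Ioc 0 (m*δ), w t ∧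
    ∫⁻ t in Set.Ioc 0 (m*δ), w t ≤ ∑ i ∈ Finset.range m, w (i*δ) * ENNReal.ofReal δ := by
  induction m with
  | zero => simp
  | succ k ih =>
    have h0k : (0:ℝ) ≤ k*δ := by positivity
    have hkk : (k:ℝ)*δ ≤ (k+1)*δ := by nlinarith
    have hsplit : Set.Ioc (0:ℝ) ((k+1)*δ) = Set.Ioc 0 (k*δ) ∪ Set.Ioc (k*δ) ((k+1)*δ) :=
      (Set.Ioc_union_Ioc_eq_Ioc h0k hkk).symm
    have hdisj : Disjoint (Set.Ioc (0:ℝ) (k*δ)) (Set.Ioc ((k:ℝ)*δ) ((k+1)*δ)) :=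
      Set.Ioc_disjoint_Ioc_of_le (le_refl _)
    have hvol : volume (Set.Ioc ((k:ℝ)*δ) ((k+1)*δ)) = ENNReal.ofReal δ := by
      rw [Real.volume_Ioc]
      congr 1
      ring
    have hint : ∫⁻ t in Set.Ioc (0:ℝ) ((k+1)*δ), w t
        = (∫⁻ t in Set.Ioc (0:ℝ) (k*δ), w t) + ∫⁻ t in Set.Ioc ((k:ℝ)*δ) ((k+1)*δ), w t := by
      rw [hsplit, lintegral_union measurableSet_Ioc hdisj]
    have hup : ∫⁻ t in Set.Ioc ((k:ℝ)*δ) ((k+1)*δ), w t ≤ w ((k:ℝ)*δ) * ENNReal.ofReal δ := by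
      calc ∫⁻ t in Set.Ioc ((k:ℝ)*δ) ((k+1)*δ), w t
          ≤ ∫⁻ _ in Set.Ioc ((k:ℝ)*δ) ((k+1)*δ), w ((k:ℝ)*δ) := by
            refine setLIntegral_mono measurable_const fun t ht => hw (le_of_lt ht.1)
        _ = w ((k:ℝ)*δ) * ENNReal.ofReal δ := by rw [setLIntegral_const, hvol]
    have hlo : w (((k:ℝ)+1)*δ) * ENNReal.ofReal δ ≤ ∫⁻ t in Set.Ioc ((k:ℝ)*δ) ((k+1)*δ), w t := by
      calc w (((k:ℝ)+1)*δ) * ENNReal.ofReal δ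
          = ∫⁻ _ in Set.Ioc ((k:ℝ)*δ) ((k+1)*δ), w (((k:ℝ)+1)*δ) := by
            rw [setLIntegral_const, hvol]
        _ ≤ ∫⁻ t in Set.Ioc ((k:ℝ)*δ) ((k+1)*δ), w t := by
            refine setLIntegral_mono (by
              have : Measurable w := hw.measurable
              exact this) fun t ht => hw ht.2
    constructor
    · rw [Finset.sum_range_succ]
      push_cast
      rw [hint]
      exact add_le_add ih.1 hlo
    · rw [Finset.sum_range_succ]
      push_cast
      rw [hint]
      exact add_le_add ih.2 hup

lemma antitone_integral_Ioi_bounds {w : ℝ → ℝ≥0∞} (hw : Antitone w) {M : ℝ}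
    (hvan : ∀ t, M ≤ t → w t = 0) {δ : ℝ} (hδ : 0 < δ) {m : ℕ} (hm : M ≤ m*δ) :
    (∑ i ∈ Finset.range m, w ((i+1)*δ) * ENNReal.ofReal δ) ≤ ∫⁻ t in Set.Ioi 0, w t ∧
    ∫⁻ t in Set.Ioi 0, w t ≤ ∑ i ∈ Finset.range m, w (i*δ) * ENNReal.ofReal δ := by
  have h0m : (0:ℝ) ≤ m*δ := by positivity
  have hIoi : ∫⁻ t in Set.Ioi (0:ℝ), w t = ∫⁻ t in Set.Ioc 0 ((m:ℝ)*δ), w t := by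
    rw [← Set.Ioc_union_Ioi_eq_Ioi h0m,
      lintegral_union measurableSet_Ioi Set.Ioc_disjoint_Ioi_same]
    have : ∫⁻ t in Set.Ioi ((m:ℝ)*δ), w t = ∫⁻ _ in Set.Ioi ((m:ℝ)*δ), (0:ℝ≥0∞) := by
      refine setLIntegral_congr_fun measurableSet_Ioi (fun t ht => ?_)
      exact hvan t (le_of_lt (lt_of_le_of_lt hm ht))
    rw [this]
    simp
  rw [hIoi]
  exact antitone_sum_le_integral hw hδ m

/-- The Riemann-sum lemma: ultrafilter limits of integrals of uniformly bounded antitone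
functions vanishing beyond `M` converge to the integral of the pointwise limit. -/
lemma tendsto_lintegral_of_antitone (𝒰 : Ultrafilter ℕ) (h : ℕ → ℝ → ℝ≥0∞) (g : ℝ → ℝ≥0∞)
    (hmono : ∀ n, Antitone (h n)) (hle : ∀ n t, h n t ≤ 1) {M : ℝ}
    (hvan : ∀ n t, M ≤ t → h n t = 0)
    (hg : ∀ t, Tendsto (fun n => h n t) 𝒰 (𝓝 (g t))) :
    Tendsto (fun n => ∫⁻ t in Set.Ioi 0, h n t) 𝒰 (𝓝 (∫⁻ t in Set.Ioi 0, g t)) := by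
  -- facts about g
  have hgmono : Antitone g := fun s t hst =>
    le_of_tendsto_of_tendsto' (hg t) (hg s) (fun n => hmono n hst)
  have hgle : ∀ t, g t ≤ 1 := fun t => le_of_tendsto' (hg t) (fun n => hle n t)
  have hgvan : ∀ t, M ≤ t → g t = 0 := by
    intro t ht
    have : Tendsto (fun n => h n t) 𝒰 (𝓝 0) := by
      have : (fun n => h n t) = fun _ => (0:ℝ≥0∞) := funext fun n => hvan n t ht
      rw [this]; exact tendsto_const_nhds
    exact tendsto_nhds_unique (hg t) this
  set L := ulim 𝒰 (fun n => ∫⁻ t in Set.Ioi 0, h n t) with hL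
  have hLspec := ulim_spec 𝒰 (fun n => ∫⁻ t in Set.Ioi 0, h n t)
  suffices hmain : L = ∫⁻ t in Set.Ioi 0, g t by rw [← hmain]; exact hLspec
  -- for each positive ε, both quantities are within ε of each other
  have key : ∀ ε : ℝ≥0, 0 < ε →
      L ≤ (∫⁻ t in Set.Ioi 0, g t) + ε ∧ (∫⁻ t in Set.Ioi 0, g t) ≤ L + ε := by
    intro ε hε
    set δ : ℝ := (ε : ℝ) with hδdef
    have hδ : 0 < δ := hε
    set m : ℕ := ⌈M/δ⌉₊ + 1 with hm
    have hMm : M ≤ m*δ := by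
      rcases le_or_gt M 0 with hM0 | hM0
      · have : (0:ℝ) ≤ m*δ := by positivity
        linarith
      · have h1 : M/δ ≤ (⌈M/δ⌉₊ : ℝ) := Nat.le_ceil _
        have h2 : M ≤ (⌈M/δ⌉₊ : ℝ) * δ := by
          rw [div_le_iff₀ hδ] at h1
          linarith
        have h3 : ((⌈M/δ⌉₊ : ℝ)) * δ ≤ m * δ := by
          have : ((⌈M/δ⌉₊:ℝ)) ≤ m := by exact_mod_cast Nat.le_succ _
          nlinarith
        linarith
    have hδ' : ENNReal.ofReal δ = (ε : ℝ≥0∞) := ENNReal.ofReal_coe_nnreal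
    -- bounds for g
    obtain ⟨hg1, hg2⟩ := antitone_integral_Ioi_bounds hgmono hgvan hδ hMm
    -- bounds for L
    have hs1 : Tendsto (fun n => ∑ i ∈ Finset.range m, h n ((i+1)*δ) * ENNReal.ofReal δ) 𝒰
        (𝓝 (∑ i ∈ Finset.range m, g ((i+1)*δ) * ENNReal.ofReal δ)) := by
      refine tendsto_finset_sum _ fun i _ => ?_
      exact ENNReal.Tendsto.mul_const (hg _) (Or.inr ENNReal.ofReal_ne_top)
    have hs2 : Tendsto (fun n => ∑ i ∈ Finset.range m, h n (i*δ) * ENNReal.ofReal δ) 𝒰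
        (𝓝 (∑ i ∈ Finset.range m, g (i*δ) * ENNReal.ofReal δ)) := by
      refine tendsto_finset_sum _ fun i _ => ?_
      exact ENNReal.Tendsto.mul_const (hg _) (Or.inr ENNReal.ofReal_ne_top)
    have hL1 : (∑ i ∈ Finset.range m, g ((i+1)*δ) * ENNReal.ofReal δ) ≤ L :=
      le_of_tendsto_of_tendsto' hs1 hLspec
        (fun n => (antitone_integral_Ioi_bounds (hmono n) (hvan n) hδ hMm).1)
    have hL2 : L ≤ ∑ i ∈ Finset.range m, g (i*δ) * ENNReal.ofReal δ :=
      le_of_tendsto_of_tendsto' hLspec hs2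
        (fun n => (antitone_integral_Ioi_bounds (hmono n) (hvan n) hδ hMm).2)
    -- the two sums differ by at most ε
    have hdiff : (∑ i ∈ Finset.range m, g (i*δ) * ENNReal.ofReal δ)
        ≤ (∑ i ∈ Finset.range m, g ((i+1)*δ) * ENNReal.ofReal δ) + ε := by
      rw [hm, Finset.sum_range_succ' (fun i => g (i*δ) * ENNReal.ofReal δ)]
      push_cast
      refine add_le_add ?_ ?_
      · refine Finset.sum_le_sum_of_subset (Finset.range_subset_range.mpr (Nat.le_succ _))
      · simp only [Nat.cast_zero, zero_mul, hδ']
        calc g 0 * (ε : ℝ≥0∞) ≤ 1 * ε := mul_le_mul_left (hgle 0) _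
          _ = ε := one_mul _
    constructor
    · calc L ≤ ∑ i ∈ Finset.range m, g (i*δ) * ENNReal.ofReal δ := hL2
        _ ≤ (∑ i ∈ Finset.range m, g ((i+1)*δ) * ENNReal.ofReal δ) + ε := hdiff
        _ ≤ (∫⁻ t in Set.Ioi 0, g t) + ε := add_le_add_left hg1 _
    · calc (∫⁻ t in Set.Ioi 0, g t) ≤ ∑ i ∈ Finset.range m, g (i*δ) * ENNReal.ofReal δ := hg2
        _ ≤ (∑ i ∈ Finset.range m, g ((i+1)*δ) * ENNReal.ofReal δ) + ε := hdiff
        _ ≤ L + ε := add_le_add_left hL1 _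
  refine le_antisymm ?_ ?_
  · exact ENNReal.le_of_forall_pos_le_add fun ε hε _ => (key ε hε).1
  · exact ENNReal.le_of_forall_pos_le_add fun ε hε _ => (key ε hε).2

variable {X : Type*} [MetricSpace X] [CompactSpace X] [MeasurableSpace X] [BorelSpace X]

/-- The limit functional on continuous functions. -/
noncomputable def Lam (𝒰 : Ultrafilter ℕ) (μs : ℕ → ProbabilityMeasure X) (F : C(X, ℝ)) : ℝ≥0∞ :=
  ulim 𝒰 (fun n => ∫⁻ x, ENNReal.ofReal (F x) ∂(μs n : Measure X))

lemma Lam_spec (𝒰 : Ultrafilter ℕ) (μs : ℕ → ProbabilityMeasure X) (F : C(X, ℝ)) :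
    Tendsto (fun n => ∫⁻ x, ENNReal.ofReal (F x) ∂(μs n : Measure X)) 𝒰 (𝓝 (Lam 𝒰 μs F)) :=
  ulim_spec _ _

lemma Lam_one (𝒰 : Ultrafilter ℕ) (μs : ℕ → ProbabilityMeasure X) : Lam 𝒰 μs 1 = 1 := by
  have : ∀ n, ∫⁻ x, ENNReal.ofReal ((1 : C(X,ℝ)) x) ∂(μs n : Measure X) = 1 := by
    intro n; simp
  simp only [Lam]
  rw [show (fun n => ∫⁻ x, ENNReal.ofReal ((1 : C(X,ℝ)) x) ∂(μs n : Measure X)) = fun _ => 1 from funext this]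
  exact ulim_const _ _

lemma Lam_mono (𝒰 : Ultrafilter ℕ) (μs : ℕ → ProbabilityMeasure X) {F G : C(X, ℝ)}
    (h : ∀ x, F x ≤ G x) : Lam 𝒰 μs F ≤ Lam 𝒰 μs G :=
  ulim_mono (fun n => lintegral_mono fun x => ENNReal.ofReal_le_ofReal (h x))

lemma Lam_add (𝒰 : Ultrafilter ℕ) (μs : ℕ → ProbabilityMeasure X) {F G : C(X, ℝ)}
    (hF : ∀ x, 0 ≤ F x) (hG : ∀ x, 0 ≤ G x) :
    Lam 𝒰 μs (F + G) = Lam 𝒰 μs F + Lam 𝒰 μs G := by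
  simp only [Lam]
  rw [← ulim_add]
  congr 1
  ext n
  rw [← lintegral_add_left (μ := (μs n : Measure X))
      (f := fun x => ENNReal.ofReal (F x))
      (ENNReal.measurable_ofReal.comp F.continuous.measurable)]
  congr 1
  ext x
  simp [ENNReal.ofReal_add (hF x) (hG x)]

variable (𝒰 : Ultrafilter ℕ) (μs : ℕ → ProbabilityMeasure X)

/-- Test functions for the Riesz content of a set `K`. -/
def testSet (K : Set X) : Set C(X, ℝ) := {F | (∀ x, 0 ≤ F x) ∧ ∀ x ∈ K, 1 ≤ F x}

lemma one_mem_testSet (K : Set X) : (1 : C(X,ℝ)) ∈ testSet K :=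
  ⟨fun x => zero_le_one, fun x _ => le_refl 1⟩

/-- The Riesz content of a set. -/
noncomputable def lamE (K : Set X) : ℝ≥0∞ := sInf (Lam 𝒰 μs '' testSet K)

lemma lamE_le_one (K : Set X) : lamE 𝒰 μs K ≤ 1 := by
  refine le_trans (sInf_le ⟨1, one_mem_testSet K, rfl⟩) ?_
  rw [Lam_one]

lemma lamE_le {K : Set X} {F : C(X,ℝ)} (hF : F ∈ testSet K) : lamE 𝒰 μs K ≤ Lam 𝒰 μs F :=
  sInf_le ⟨F, hF, rfl⟩

lemma lamE_mono {K L : Set X} (h : K ⊆ L) : lamE 𝒰 μs K ≤ lamE 𝒰 μs L := by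
  refine sInf_le_sInf (Set.image_mono ?_)
  exact fun F hF => ⟨hF.1, fun x hx => hF.2 x (h hx)⟩

lemma le_lamE {K : Set X} {a : ℝ≥0∞} (h : ∀ F ∈ testSet K, a ≤ Lam 𝒰 μs F) :
    a ≤ lamE 𝒰 μs K :=
  le_sInf (by rintro b ⟨F, hF, rfl⟩; exact h F hF)

lemma lamE_union_le (K L : Set X) :
    lamE 𝒰 μs (K ∪ L) ≤ lamE 𝒰 μs K + lamE 𝒰 μs L := by
  have key : ∀ F ∈ testSet K, ∀ G ∈ testSet (X := X) L,
      lamE 𝒰 μs (K ∪ L) ≤ Lam 𝒰 μs F + Lam 𝒰 μs G := by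
    intro F hF G hG
    refine le_trans (lamE_le 𝒰 μs (K := K ∪ L) (F := F + G) ?_) ?_
    · refine ⟨fun x => add_nonneg (hF.1 x) (hG.1 x), ?_⟩
      rintro x (hx | hx)
      · exact le_trans (hF.2 x hx) (le_add_of_nonneg_right (hG.1 x))
      · exact le_trans (hG.2 x hx) (le_add_of_nonneg_left (hF.1 x))
    · rw [Lam_add 𝒰 μs hF.1 hG.1]
  have step2 : ∀ F ∈ testSet (X := X) K,
      lamE 𝒰 μs (K ∪ L) ≤ Lam 𝒰 μs F + lamE 𝒰 μs L := by
    intro F hF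
    conv_rhs => rw [lamE, sInf_image']
    rw [ENNReal.add_iInf]
    exact le_iInf fun G => key F hF G G.2
  conv_rhs => rw [lamE, sInf_image', ENNReal.iInf_add]
  exact le_iInf fun F => step2 F F.2

lemma lamE_union_disjoint {K L : Set X} (hK : IsClosed K) (hL : IsClosed L)
    (hd : Disjoint K L) :
    lamE 𝒰 μs (K ∪ L) = lamE 𝒰 μs K + lamE 𝒰 μs L := by
  refine le_antisymm (lamE_union_le 𝒰 μs K L) ?_
  refine le_lamE 𝒰 μs ?_
  rintro F ⟨hF0, hF1⟩
  obtain ⟨g, hg0, hg1, hg01⟩ := exists_continuous_zero_one_of_isClosed hL hK hd.symm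
  -- g = 0 on L, g = 1 on K, 0 ≤ g ≤ 1
  have h1 : (F * g) ∈ testSet K := by
    refine ⟨fun x => mul_nonneg (hF0 x) (hg01 x).1, fun x hx => ?_⟩
    have := hg1 hx
    simp only [ContinuousMap.mul_apply]
    rw [show g x = 1 from this]
    simpa using hF1 x (Or.inl hx)
  have h2 : (F * (1 - g)) ∈ testSet L := by
    refine ⟨fun x => mul_nonneg (hF0 x) (by simpa using (hg01 x).2), fun x hx => ?_⟩
    have := hg0 hx
    simp only [ContinuousMap.mul_apply, ContinuousMap.sub_apply, ContinuousMap.one_apply]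
    rw [show g x = 0 from this]
    simpa using hF1 x (Or.inr hx)
  have hsum : F * g + F * (1 - g) = F := by ring
  calc lamE 𝒰 μs K + lamE 𝒰 μs L ≤ Lam 𝒰 μs (F * g) + Lam 𝒰 μs (F * (1 - g)) :=
        add_le_add (lamE_le 𝒰 μs h1) (lamE_le 𝒰 μs h2)
    _ = Lam 𝒰 μs F := by rw [← Lam_add 𝒰 μs h1.1 h2.1, hsum]

/-- The Riesz content associated to the ultrafilter limit of the measures. -/
noncomputable def rieszCont : Content X where
  toFun K := (lamE 𝒰 μs K).toNNReal
  mono' K₁ K₂ h := ENNReal.toNNReal_mono ((lamE_le_one 𝒰 μs K₂).trans_lt ENNReal.one_lt_top).ne (lamE_mono 𝒰 μs h)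
  sup_disjoint' K₁ K₂ hd h₁ h₂ := by
    have h := lamE_union_disjoint 𝒰 μs K₁.isCompact.isClosed K₂.isCompact.isClosed hd
    simp only [TopologicalSpace.Compacts.coe_sup] at *
    rw [h]
    rw [ENNReal.toNNReal_add ((lamE_le_one 𝒰 μs _).trans_lt ENNReal.one_lt_top).ne ((lamE_le_one 𝒰 μs _).trans_lt ENNReal.one_lt_top).ne]
  sup_le' K₁ K₂ := by
    have h := lamE_union_le 𝒰 μs K₁ K₂
    have hne : lamE 𝒰 μs (K₁ : Set X) ≠ ⊤ := ((lamE_le_one 𝒰 μs _).trans_lt ENNReal.one_lt_top).ne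
    have hne2 : lamE 𝒰 μs (K₂ : Set X) ≠ ⊤ := ((lamE_le_one 𝒰 μs _).trans_lt ENNReal.one_lt_top).ne
    have : (lamE 𝒰 μs ((K₁ ⊔ K₂ : TopologicalSpace.Compacts X) : Set X)).toNNReal
        ≤ (lamE 𝒰 μs (K₁ : Set X) + lamE 𝒰 μs (K₂ : Set X)).toNNReal := by
      refine ENNReal.toNNReal_mono (by simp [ENNReal.add_eq_top, hne, hne2]) ?_
      simpa [TopologicalSpace.Compacts.coe_sup] using h
    simpa [ENNReal.toNNReal_add hne hne2] using this


/-- The candidate limit measure. -/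
noncomputable def limMeas : Measure X := (rieszCont 𝒰 μs).measure

lemma rieszCont_apply (K : TopologicalSpace.Compacts X) :
    ((rieszCont 𝒰 μs).toFun K : ℝ≥0∞) = lamE 𝒰 μs K := by
  simp only [rieszCont]
  rw [ENNReal.coe_toNNReal ((lamE_le_one 𝒰 μs _).trans_lt ENNReal.one_lt_top).ne]

lemma limMeas_open (U : Set X) (hU : IsOpen U) :
    limMeas 𝒰 μs U = (rieszCont 𝒰 μs).innerContent ⟨U, hU⟩ := by
  rw [limMeas, Content.measure_apply _ hU.measurableSet]
  exact (rieszCont 𝒰 μs).outerMeasure_opens ⟨U, hU⟩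

lemma limMeas_univ : limMeas 𝒰 μs Set.univ = 1 := by
  rw [limMeas_open 𝒰 μs Set.univ isOpen_univ]
  have h := (rieszCont 𝒰 μs).innerContent_of_isCompact (K := (Set.univ : Set X))
    isCompact_univ isOpen_univ
  rw [h]
  refine Eq.trans (rieszCont_apply 𝒰 μs ⟨Set.univ, isCompact_univ⟩) ?_
  refine le_antisymm (lamE_le_one 𝒰 μs _) ?_
  refine le_lamE 𝒰 μs ?_
  intro F hF
  have : Lam 𝒰 μs 1 ≤ Lam 𝒰 μs F := Lam_mono 𝒰 μs (fun x => by
    simpa using hF.2 x (Set.mem_univ x))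
  rwa [Lam_one] at this

instance limMeas_prob : IsProbabilityMeasure (limMeas 𝒰 μs) := ⟨limMeas_univ 𝒰 μs⟩

lemma limMeas_open_le {U : Set X} (hU : IsOpen U) :
    limMeas 𝒰 μs U ≤ ulim 𝒰 (fun n => (μs n : Measure X) U) := by
  rw [limMeas_open 𝒰 μs U hU]
  refine iSup₂_le ?_
  intro K hK
  refine le_trans (le_of_eq (rieszCont_apply 𝒰 μs K)) ?_
  obtain ⟨g, hg0, hg1, hg01⟩ := exists_continuous_zero_one_of_isClosed
    (isClosed_compl_iff.mpr hU) K.isCompact.isClosed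
    (Set.disjoint_left.mpr fun x hx hxK => hx (hK hxK))
  have hmem : g ∈ testSet (X := X) K := ⟨fun x => (hg01 x).1, fun x hx => le_of_eq (hg1 hx).symm⟩
  refine le_trans (lamE_le 𝒰 μs hmem) ?_
  refine ulim_mono ?_
  intro n
  have hb : ∀ x, ENNReal.ofReal (g x) ≤ U.indicator (fun _ => (1 : ℝ≥0∞)) x := by
    intro x
    by_cases hx : x ∈ U
    · rw [Set.indicator_of_mem hx]
      simpa using ENNReal.ofReal_le_ofReal (hg01 x).2
    · rw [Set.indicator_of_notMem hx]
      have : g x = 0 := hg0 hx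
      simp [this]
  calc ∫⁻ x, ENNReal.ofReal (g x) ∂(μs n : Measure X)
      ≤ ∫⁻ x, U.indicator (fun _ => (1 : ℝ≥0∞)) x ∂(μs n : Measure X) := lintegral_mono hb
    _ = (μs n : Measure X) U := by
        rw [lintegral_indicator hU.measurableSet]
        simp

lemma limMeas_closed_ge {F : Set X} (hF : IsClosed F) :
    ulim 𝒰 (fun n => (μs n : Measure X) F) ≤ limMeas 𝒰 μs F := by
  have key : ∀ (μ : Measure X), IsProbabilityMeasure μ → μ F = 1 - μ Fᶜ := by
    intro μ hμ
    have h := measure_add_measure_compl (μ := μ) hF.measurableSet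
    rw [measure_univ] at h
    rw [ENNReal.eq_sub_of_add_eq (measure_ne_top μ Fᶜ) h]
  have h1 : (fun n => (μs n : Measure X) F) = fun n => 1 - (μs n : Measure X) Fᶜ := by
    ext n; exact key _ inferInstance
  have h2 : Tendsto (fun n => (μs n : Measure X) Fᶜ) 𝒰
      (𝓝 (ulim 𝒰 (fun n => (μs n : Measure X) Fᶜ))) := ulim_spec _ _
  have h3 : Tendsto (fun n => (1 : ℝ≥0∞) - (μs n : Measure X) Fᶜ) 𝒰
      (𝓝 (1 - ulim 𝒰 (fun n => (μs n : Measure X) Fᶜ))) := by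
    exact (ENNReal.continuous_sub_left ENNReal.one_ne_top).continuousAt.tendsto.comp h2
  have h4 : ulim 𝒰 (fun n => (μs n : Measure X) F)
      = 1 - ulim 𝒰 (fun n => (μs n : Measure X) Fᶜ) := by
    rw [h1]; exact ulim_eq h3
  rw [h4, key (limMeas 𝒰 μs) (limMeas_prob 𝒰 μs)]
  exact tsub_le_tsub_left (limMeas_open_le 𝒰 μs hF.isOpen_compl) 1

lemma lam_eq_lintegral (F : C(X, ℝ)) (hF : ∀ x, 0 ≤ F x) :
    Lam 𝒰 μs F = ∫⁻ x, ENNReal.ofReal (F x) ∂(limMeas 𝒰 μs) := by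
  -- X is nonempty since it carries a probability measure
  have hXne : Nonempty X := by
    by_contra hX
    have : (μs 0 : Measure X) Set.univ = 1 := measure_univ
    rw [Set.univ_eq_empty_iff.mpr (not_nonempty_iff.mp hX)] at this
    simp at this
  obtain ⟨xM, -, hxM⟩ := isCompact_univ.exists_isMaxOn Set.univ_nonempty
    (F.continuous.continuousOn : ContinuousOn F Set.univ)
  set M : ℝ := F xM with hMdef
  have hbound : ∀ x, F x ≤ M := fun x => hxM (Set.mem_univ x)
  -- layer functions
  set h : ℕ → ℝ → ℝ≥0∞ := fun n t => (μs n : Measure X) {x | t < F x} with hh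
  set g : ℝ → ℝ≥0∞ := fun t => ulim 𝒰 (fun n => h n t) with hg
  have hmono : ∀ n, Antitone (h n) := by
    intro n s t hst
    exact measure_mono (fun x hx => lt_of_le_of_lt hst hx)
  have hle : ∀ n t, h n t ≤ 1 := fun n t => prob_le_one
  have hvan : ∀ n t, M ≤ t → h n t = 0 := by
    intro n t ht
    have : {x | t < F x} = ∅ := by
      ext x
      simp only [Set.mem_setOf_eq, Set.mem_empty_iff_false, iff_false, not_lt]
      exact le_trans (hbound x) ht
    rw [hh]; simp only [this]; simp
  have hgs : ∀ t, Tendsto (fun n => h n t) 𝒰 (𝓝 (g t)) := fun t => ulim_spec _ _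
  have hgmono : Antitone g := fun s t hst =>
    le_of_tendsto_of_tendsto' (hgs t) (hgs s) (fun n => hmono n hst)
  -- sandwich: ν{t < F} ≤ g t ≤ ν{t ≤ F}
  have hlow : ∀ t : ℝ, limMeas 𝒰 μs {x | t < F x} ≤ g t := by
    intro t
    have hUopen : IsOpen {x | t < F x} := isOpen_lt continuous_const F.continuous
    exact limMeas_open_le 𝒰 μs hUopen
  have hhigh : ∀ t : ℝ, g t ≤ limMeas 𝒰 μs {x | t ≤ F x} := by
    intro t
    have hFc : IsClosed {x | t ≤ F x} := isClosed_le continuous_const F.continuous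
    have hstep : ∀ n, h n t ≤ (μs n : Measure X) {x | t ≤ F x} := by
      intro n
      exact measure_mono (fun x (hx : t < F x) => le_of_lt hx)
    refine le_trans (ulim_mono hstep) ?_
    exact limMeas_closed_ge 𝒰 μs hFc
  -- Riemann-sum lemma
  have hR := tendsto_lintegral_of_antitone 𝒰 h g hmono hle hvan hgs
  -- layer cake on both sides
  have hcakeμ : ∀ n, ∫⁻ x, ENNReal.ofReal (F x) ∂(μs n : Measure X) = ∫⁻ t in Set.Ioi 0, h n t := by
    intro n
    exact lintegral_eq_lintegral_meas_lt _ (ae_of_all _ hF) F.continuous.aemeasurable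
  have hcakeν_lt : ∫⁻ x, ENNReal.ofReal (F x) ∂(limMeas 𝒰 μs)
      = ∫⁻ t in Set.Ioi 0, limMeas 𝒰 μs {x | t < F x} :=
    lintegral_eq_lintegral_meas_lt _ (ae_of_all _ hF) F.continuous.aemeasurable
  have hcakeν_le : ∫⁻ x, ENNReal.ofReal (F x) ∂(limMeas 𝒰 μs)
      = ∫⁻ t in Set.Ioi 0, limMeas 𝒰 μs {x | t ≤ F x} :=
    lintegral_eq_lintegral_meas_le _ (ae_of_all _ hF) F.continuous.aemeasurable
  -- conclude : ∫ g over Ioi 0 equals ∫ ofReal F dν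
  have hgint : ∫⁻ t in Set.Ioi 0, g t = ∫⁻ x, ENNReal.ofReal (F x) ∂(limMeas 𝒰 μs) := by
    refine le_antisymm ?_ ?_
    · rw [hcakeν_le]
      exact lintegral_mono fun t => hhigh t
    · rw [hcakeν_lt]
      exact lintegral_mono fun t => hlow t
  have : Tendsto (fun n => ∫⁻ x, ENNReal.ofReal (F x) ∂(μs n : Measure X)) 𝒰
      (𝓝 (∫⁻ x, ENNReal.ofReal (F x) ∂(limMeas 𝒰 μs))) := by
    rw [← hgint]
    simp only [hcakeμ]
    exact hR
  exact ulim_eq this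

/-- Mini-Prokhorov: every sequence of probability measures on a compact metric space
converges along any ultrafilter. -/
lemma exists_tendsto_ultrafilter (μs : ℕ → ProbabilityMeasure X) (𝒰 : Ultrafilter ℕ) :
    ∃ ν : ProbabilityMeasure X, Tendsto μs 𝒰 (𝓝 ν) := by
  refine ⟨(⟨limMeas 𝒰 μs, limMeas_prob 𝒰 μs⟩ : ProbabilityMeasure X), ?_⟩
  refine ProbabilityMeasure.tendsto_iff_forall_lintegral_tendsto.mpr ?_
  intro f
  show Tendsto (fun i => ∫⁻ x, (f x : ℝ≥0∞) ∂(μs i : Measure X)) 𝒰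
    (𝓝 (∫⁻ x, (f x : ℝ≥0∞) ∂(limMeas 𝒰 μs)))
  set F : C(X, ℝ) := ⟨fun x => (f x : ℝ), by continuity⟩ with hFdef
  have hF0 : ∀ x, 0 ≤ F x := fun x => (f x).2
  have hofReal : ∀ x, ENNReal.ofReal (F x) = (f x : ℝ≥0∞) := fun x =>
    ENNReal.ofReal_coe_nnreal
  have h1 : ∀ (μ : Measure X), ∫⁻ x, (f x : ℝ≥0∞) ∂μ = ∫⁻ x, ENNReal.ofReal (F x) ∂μ := by
    intro μ
    refine lintegral_congr fun x => (hofReal x).symm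
  simp only [h1]
  have := lam_eq_lintegral 𝒰 μs F hF0
  rw [← this]
  exact Lam_spec 𝒰 μs F

lemma mapClusterPt_of_ultrafilter {α β : Type*} [TopologicalSpace β] {𝒰 : Ultrafilter α}
    {l : Filter α} (h𝒰 : ↑𝒰 ≤ l) {u : α → β} {x : β} (h : Tendsto u 𝒰 (𝓝 x)) :
    MapClusterPt x l u := by
  have hle : Filter.map u ↑𝒰 ≤ 𝓝 x ⊓ Filter.map u l := le_inf h (Filter.map_mono h𝒰)
  exact Filter.neBot_of_le hle

instance compactSpace_probabilityMeasure : CompactSpace (ProbabilityMeasure X) := by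
  letI : MetricSpace (ProbabilityMeasure X) := TopologicalSpace.metrizableSpaceMetric _
  rw [compactSpace_iff_seqCompactSpace]
  constructor
  intro u _
  obtain ⟨ν, hν⟩ := exists_tendsto_ultrafilter u (Ultrafilter.of atTop)
  have hcl : MapClusterPt ν atTop u :=
    mapClusterPt_of_ultrafilter (Ultrafilter.of_le atTop) hν
  obtain ⟨φ, hφ, hconv⟩ := TopologicalSpace.FirstCountableTopology.tendsto_subseq hcl
  exact ⟨ν, Set.mem_univ ν, φ, hφ, hconv⟩

section empirical
variable (f : X → X) (hf : Continuous f)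

lemma integral_empirical (g : BoundedContinuousFunction X ℝ) (x : X) (n : ℕ) :
    ∫ y, g y ∂(empirical f x n : Measure X)
      = ((n : ℝ) + 1)⁻¹ * ∑ i ∈ Finset.range (n + 1), g (f^[i] x) := by
  show ∫ y, g y ∂(empiricalMeasure f x n) = _
  rw [empiricalMeasure, integral_smul_measure]
  rw [integral_finset_sum_measure (fun i _ => g.integrable _)]
  have h1 : ∀ i, ∫ y, g y ∂(Measure.dirac (f^[i] x)) = g (f^[i] x) := fun i =>
    integral_dirac _ _
  simp only [h1]
  have hc : (((n : ℝ≥0∞) + 1)⁻¹).toReal = ((n : ℝ) + 1)⁻¹ := by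
    rw [ENNReal.toReal_inv, show ((n : ℝ≥0∞) + 1) = ((n + 1 : ℕ) : ℝ≥0∞) from by push_cast; ring,
      ENNReal.toReal_natCast]
    push_cast
    ring
  rw [hc, smul_eq_mul]

lemma invariance_aux (hf : Continuous f) {x : X} {ν : ProbabilityMeasure X} {𝒰 : Ultrafilter ℕ}
    (h𝒰 : ↑𝒰 ≤ (atTop : Filter ℕ))
    (hν : Tendsto (empirical f x) 𝒰 (𝓝 ν)) :
    Measure.map f (ν : Measure X) = (ν : Measure X) := by
  have hmble : AEMeasurable f (ν : Measure X) := hf.aemeasurable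
  -- the pushforward of the empirical measures also converges to ν
  have h3 : Tendsto (fun n => (empirical f x n).map hf.aemeasurable) 𝒰 (𝓝 ν) := by
    rw [ProbabilityMeasure.tendsto_iff_forall_integral_tendsto]
    intro g
    have hB : Tendsto (fun n => ∫ y, g y ∂(empirical f x n : Measure X)) 𝒰
        (𝓝 (∫ y, g y ∂(ν : Measure X))) :=
      ProbabilityMeasure.tendsto_iff_forall_integral_tendsto.mp hν g
    have hAeq : ∀ n, ∫ y, g y ∂((empirical f x n).map hf.aemeasurable : Measure X)
        = (∫ y, g y ∂(empirical f x n : Measure X))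
          + ((n : ℝ) + 1)⁻¹ * (g (f^[n+1] x) - g x) := by
      intro n
      rw [ProbabilityMeasure.toMeasure_map]
      rw [integral_map hf.aemeasurable g.continuous.aestronglyMeasurable]
      have hgf : ∫ y, g (f y) ∂(empirical f x n : Measure X)
          = ∫ y, (g.compContinuous ⟨f, hf⟩) y ∂(empirical f x n : Measure X) := rfl
      rw [hgf, integral_empirical, integral_empirical]
      have hcomp : ∀ i, (g.compContinuous ⟨f, hf⟩) (f^[i] x) = g (f^[i+1] x) := by
        intro i
        simp only [BoundedContinuousFunction.compContinuous_apply, ContinuousMap.coe_mk]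
        rw [← Function.iterate_succ_apply' f i x]
      simp only [hcomp]
      have hsum : ∑ i ∈ Finset.range (n + 1), g (f^[i+1] x)
          = (∑ i ∈ Finset.range (n + 1), g (f^[i] x)) + (g (f^[n+1] x) - g x) := by
        have h1 := Finset.sum_range_succ (fun i => g (f^[i] x)) (n+1)
        have h2 := Finset.sum_range_succ' (fun i => g (f^[i] x)) (n+1)
        have : (∑ i ∈ Finset.range (n+1), g (f^[i+1] x)) + g (f^[0] x)
            = (∑ i ∈ Finset.range (n+1), g (f^[i] x)) + g (f^[n+1] x) := by
          rw [← h2, h1]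
        simp only [Function.iterate_zero_apply] at this
        linarith
      rw [hsum]
      ring
    have hrem : Tendsto (fun n : ℕ => ((n : ℝ) + 1)⁻¹ * (g (f^[n+1] x) - g x)) atTop (𝓝 0) := by
      have hb : ∀ n : ℕ, |((n : ℝ) + 1)⁻¹ * (g (f^[n+1] x) - g x)| ≤ (2 * ‖g‖) * ((n : ℝ) + 1)⁻¹ := by
        intro n
        rw [abs_mul]
        have h1 : |((n:ℝ)+1)⁻¹| = ((n:ℝ)+1)⁻¹ := abs_of_nonneg (by positivity)
        rw [h1, mul_comm]
        refine mul_le_mul_of_nonneg_right ?_ (by positivity)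
        calc |g (f^[n+1] x) - g x| ≤ |g (f^[n+1] x)| + |g x| := abs_sub _ _
          _ ≤ ‖g‖ + ‖g‖ := add_le_add (g.norm_coe_le_norm _) (g.norm_coe_le_norm _)
          _ = 2 * ‖g‖ := by ring
      have hz : Tendsto (fun n : ℕ => (2 * ‖g‖) * ((n : ℝ) + 1)⁻¹) atTop (𝓝 0) := by
        have := tendsto_one_div_add_atTop_nhds_zero_nat (𝕜 := ℝ)
        have h2 : Tendsto (fun n : ℕ => ((n : ℝ) + 1)⁻¹) atTop (𝓝 0) := by
          simpa [one_div] using this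
        simpa using h2.const_mul (2 * ‖g‖)
      exact squeeze_zero_norm hb hz
    have := hB.add ((hrem.mono_left h𝒰))
    rw [add_zero] at this
    refine Tendsto.congr (fun n => (hAeq n).symm) this
  have h2 : Tendsto (fun n => (empirical f x n).map hf.aemeasurable) 𝒰
      (𝓝 (ν.map hf.aemeasurable)) :=
    ((ProbabilityMeasure.continuous_map hf).continuousAt.tendsto).comp hν
  have heq : ν.map hf.aemeasurable = ν := tendsto_nhds_unique h2 h3
  calc Measure.map f (ν : Measure X) = ((ν.map hf.aemeasurable : ProbabilityMeasure X) : Measure X) :=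
        (ProbabilityMeasure.toMeasure_map ν hf.aemeasurable).symm
    _ = (ν : Measure X) := by rw [heq]

end empirical

end PhysLike


/-- **Existence of physical-like measures** (Catsigeras–Enrich).  If `f` is a continuous
map of a compact metric space, `m` a Borel probability measure and `d*` a metric inducing
the weak* topology on probability measures, then there is an `f`-invariant probability
measure `μ` such that for every `ε > 0` the set `{x : d*(τ_f(x), μ) < ε}` has positive
`m`-measure. -/
theorem exists_physical_like_measure {X : Type*} [MetricSpace X] [CompactSpace X]
    [MeasurableSpace X] [BorelSpace X]
    (f : X → X) (hf : Continuous f)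
    (m : ProbabilityMeasure X)
    (dstar : ProbabilityMeasure X → ProbabilityMeasure X → ℝ)
    (hdstar : ∀ (ν : ProbabilityMeasure X) (s : Set (ProbabilityMeasure X)),
      s ∈ 𝓝 ν ↔ ∃ ε > 0, {ρ | dstar ρ ν < ε} ⊆ s) :
    ∃ μ : ProbabilityMeasure X,
      Measure.map f (μ : Measure X) = (μ : Measure X) ∧
      ∀ ε > 0, 0 < m {x | ∃ ν ∈ tauSet f x, dstar ν μ < ε} := by
  classical
  by_contra hcon
  push_neg at hcon
  set 𝒰 : Ultrafilter ℕ := Ultrafilter.of atTop with h𝒰def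
  have h𝒰 : ↑𝒰 ≤ (atTop : Filter ℕ) := Ultrafilter.of_le _
  choose ν hν using fun x : X => PhysLike.exists_tendsto_ultrafilter (empirical f x) 𝒰
  have hinv : ∀ x, Measure.map f (ν x : Measure X) = (ν x : Measure X) := fun x =>
    PhysLike.invariance_aux f hf h𝒰 (hν x)
  have htau : ∀ x, ν x ∈ tauSet f x := fun x =>
    PhysLike.mapClusterPt_of_ultrafilter h𝒰 (hν x)
  set I : Set (ProbabilityMeasure X) :=
    {μ | Measure.map f (μ : Measure X) = (μ : Measure X)} with hI
  have hIclosed : IsClosed I := by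
    have hre : I = {μ : ProbabilityMeasure X | μ.map hf.aemeasurable = μ} := by
      ext μ
      constructor
      · intro h
        apply ProbabilityMeasure.toMeasure_injective
        rw [ProbabilityMeasure.toMeasure_map]
        exact h
      · intro h
        have := congrArg ProbabilityMeasure.toMeasure h
        rwa [ProbabilityMeasure.toMeasure_map] at this
    rw [hre]
    exact isClosed_eq (ProbabilityMeasure.continuous_map hf) continuous_id
  have hIcomp : IsCompact I := hIclosed.isCompact
  choose! eps heps hzero using hcon
  have hUnhds : ∀ μ ∈ I, {ρ | dstar ρ μ < eps μ} ∈ 𝓝 μ := by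
    intro μ hμ
    rw [hdstar]
    exact ⟨eps μ, heps μ hμ, subset_rfl⟩
  obtain ⟨t, htI, hcover⟩ := hIcomp.elim_nhds_subcover _ hUnhds
  have hSzero : ∀ μ ∈ t,
      (m : Measure X) {x | ∃ ρ ∈ tauSet f x, dstar ρ μ < eps μ} = 0 := by
    intro μ hμt
    have h := hzero μ (htI μ hμt)
    have h0 : m {x | ∃ ρ ∈ tauSet f x, dstar ρ μ < eps μ} = 0 :=
      le_antisymm h zero_le
    rw [← ProbabilityMeasure.ennreal_coeFn_eq_coeFn_toMeasure, h0, ENNReal.coe_zero]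
  have hcoverX : (Set.univ : Set X)
      ⊆ ⋃ μ ∈ t, {x | ∃ ρ ∈ tauSet f x, dstar ρ μ < eps μ} := by
    intro x _
    have hx : ν x ∈ I := hinv x
    obtain ⟨μ, hμt, hμmem⟩ := Set.mem_iUnion₂.mp (hcover hx)
    exact Set.mem_iUnion₂.mpr ⟨μ, hμt, ⟨ν x, htau x, hμmem⟩⟩
  have hcontra : (1 : ℝ≥0∞) ≤ 0 := by
    calc (1:ℝ≥0∞) = (m : Measure X) Set.univ := measure_univ.symm
      _ ≤ (m : Measure X) (⋃ μ ∈ t, {x | ∃ ρ ∈ tauSet f x, dstar ρ μ < eps μ}) :=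
          measure_mono hcoverX
      _ ≤ ∑ μ ∈ t, (m : Measure X) {x | ∃ ρ ∈ tauSet f x, dstar ρ μ < eps μ} :=
          measure_biUnion_finset_le _ _
      _ = 0 := Finset.sum_eq_zero hSzero
  simp at hcontra
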